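/- Let ψ: [0,1]^{s−1} → ℝ_+ (s ≥ 2) be a bounded measurable function with ψ(x) ≤ L for all x, C := ∫_{[0,1]^{s−1}} ψ > 0, and let A = {x ∈ [0,1]^s : ψ(x_1,…,x_{s−1}) ≥ L·x_s}. Suppose A is pseudo-convex with an admissible convex covering of p parts and q convex parts, and suppose for every t ∈ [0,1]^{s−1} the set J_t^* = ([0,t) × [0,1]) ∩ A is pseudo-convex with admissible covering of at most p parts and at least q convex parts. Let P_M^{(s)} = {x_0,…,x_{M−1}} ⊆ [0,1]^s be a point set with isotropic discrepancy J_M. Let N = ∑_{n=0}^{M−1} 1_A(x_n) and let y_0,…,y_{N−1} ∈ [0,1]^{s−1} be the first s−1 coordinates of the accepted points (those x_n ∈ A). Then D_{N,ψ}^* ≤ (M/N)·2·(2p−q)·J_M(P_M^{(s)}). -/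

import Mathlib

open MeasureTheory Set
open scoped ENNReal

/-- The unit cube `[0,1]^s`. -/
def unitCube (s : ℕ) : Set (Fin s → ℝ) := Set.univ.pi fun _ => Set.Icc (0 : ℝ) 1

/-- The anchored box `[0, t) = ∏_{i} [0, t_i)` in dimension `d`. -/
def anchoredBox (d : ℕ) (t : Fin d → ℝ) : Set (Fin d → ℝ) :=
  Set.univ.pi fun i => Set.Ico 0 (t i)

/-- The region `A = {x ∈ [0,1]^{d+1} : ψ(x_1,…,x_d) ≥ L x_{d+1}}` below the graph of `ψ/L`. -/
def lowerGraph (d : ℕ) (L : ℝ) (ψ : (Fin d → ℝ) → ℝ) : Set (Fin (d + 1) → ℝ) :=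
  {x | x ∈ unitCube (d + 1) ∧ L * x (Fin.last d) ≤ ψ fun i => x i.castSucc}

/-- The test set `J_t^* = ([0,t) × [0,1]) ∩ A`. -/
def Jstar (d : ℕ) (L : ℝ) (ψ : (Fin d → ℝ) → ℝ) (t : Fin d → ℝ) : Set (Fin (d + 1) → ℝ) :=
  {x | (fun i => x i.castSucc) ∈ anchoredBox d t ∧ x (Fin.last d) ∈ Set.Icc (0 : ℝ) 1}
    ∩ lowerGraph d L ψ

/-- `A0` is a pseudo-convex subset of `[0,1]^s` with an admissible convex covering of
`p` parts, `q` of which are convex parts of `A0`. -/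
def AdmissCover {s : ℕ} (p q : ℕ) (A0 : Set (Fin s → ℝ)) : Prop :=
  q ≤ p ∧ ∃ A : Fin p → Set (Fin s → ℝ),
    (∀ j, Convex ℝ (A j)) ∧ (∀ j, A j ⊆ unitCube s) ∧
    (∀ i j, i ≠ j → Disjoint (A i) (A j)) ∧ A0 ⊆ (⋃ j, A j) ∧
    (∀ j : Fin p, (j : ℕ) < q → A j ⊆ A0) ∧ (∀ j : Fin p, q ≤ (j : ℕ) → Convex ℝ (A j \ A0))

/-- Local discrepancy `|(1/N) ∑ 1_B(x_n) - λ(B)|`. -/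
noncomputable def empDisc {s : ℕ} (N : ℕ) (x : Fin N → (Fin s → ℝ))
    (B : Set (Fin s → ℝ)) : ℝ :=
  |(1 / (N : ℝ)) * ∑ n, Set.indicator B (fun _ => (1 : ℝ)) (x n) - (volume B).toReal|

/-- Isotropic discrepancy: supremum of the local discrepancy over convex subsets of the cube. -/
noncomputable def isoDisc {s : ℕ} (N : ℕ) (x : Fin N → (Fin s → ℝ)) : ℝ :=
  sSup {r : ℝ | ∃ J : Set (Fin s → ℝ), Convex ℝ J ∧ J ⊆ unitCube s ∧ r = empDisc N x J}

lemma measurableSet_unitCube (s : ℕ) : MeasurableSet (unitCube s) :=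
  MeasurableSet.univ_pi fun _ => measurableSet_Icc

lemma measurableSet_anchoredBox (d : ℕ) (t : Fin d → ℝ) : MeasurableSet (anchoredBox d t) :=
  MeasurableSet.univ_pi fun _ => measurableSet_Ico

lemma volume_unitCube (s : ℕ) : volume (unitCube s) = 1 := by
  rw [unitCube, volume_pi_pi]; simp

lemma volume_slice (d : ℕ) (L : ℝ) (hL0 : 0 < L) (ψ : (Fin d → ℝ) → ℝ)
    (hmeas : Measurable ψ) (hLψ : ∀ z, ψ z ≤ L)
    (S : Set (Fin d → ℝ)) (hS : MeasurableSet S) :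
    volume {x : Fin (d+1) → ℝ | (fun i => x i.castSucc) ∈ S ∧ x (Fin.last d) ∈ Icc (0:ℝ) 1
      ∧ L * x (Fin.last d) ≤ ψ (fun i => x i.castSucc)}
      = ∫⁻ z in S, ENNReal.ofReal (ψ z / L) := by
  set T : Set (ℝ × (Fin d → ℝ)) :=
    (Prod.snd ⁻¹' S) ∩ (Prod.fst ⁻¹' Icc (0:ℝ) 1) ∩ {p | L * p.1 ≤ ψ p.2} with hTdef
  have hT : MeasurableSet T :=
    ((measurable_snd hS).inter (measurable_fst measurableSet_Icc)).inter
      (measurableSet_le (measurable_const.mul measurable_fst) (hmeas.comp measurable_snd))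
  have hpre : {x : Fin (d+1) → ℝ | (fun i => x i.castSucc) ∈ S ∧ x (Fin.last d) ∈ Icc (0:ℝ) 1
      ∧ L * x (Fin.last d) ≤ ψ (fun i => x i.castSucc)}
      = (MeasurableEquiv.piFinSuccAbove (fun _ : Fin (d+1) => ℝ) (Fin.last d)) ⁻¹' T := by
    ext x
    simp [hTdef, MeasurableEquiv.piFinSuccAbove_apply, Fin.succAbove_last, and_assoc, Fin.init]
    exact Iff.rfl
  rw [hpre, (volume_preserving_piFinSuccAbove (fun _ : Fin (d+1) => ℝ)
    (Fin.last d)).measure_preimage hT.nullMeasurableSet]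
  rw [Measure.volume_eq_prod, Measure.prod_apply_symm hT]
  have hslice : ∀ z : Fin d → ℝ, volume ((fun u => (u, z)) ⁻¹' T)
      = S.indicator (fun z => ENNReal.ofReal (ψ z / L)) z := by
    intro z
    by_cases hz : z ∈ S
    · have : (fun u : ℝ => (u, z)) ⁻¹' T = Icc 0 (ψ z / L) := by
        ext u
        simp only [hTdef, mem_preimage, mem_inter_iff, mem_setOf_eq, mem_Icc, hz, true_and]
        constructor
        · rintro ⟨⟨h0, h1⟩, h2⟩
          exact ⟨h0, (le_div_iff₀ hL0).2 (by linarith [mul_comm L u])⟩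
        · rintro ⟨h0, h1⟩
          have h2 : u * L ≤ ψ z := (le_div_iff₀ hL0).1 h1
          have h3 : ψ z / L ≤ 1 := div_le_one_of_le₀ (hLψ z) hL0.le
          exact ⟨⟨h0, h1.trans h3⟩, by linarith [mul_comm L u]⟩
      rw [this, Real.volume_Icc, indicator_of_mem hz]
      norm_num
    · have : (fun u : ℝ => (u, z)) ⁻¹' T = ∅ := by
        ext u; simp [hTdef, hz]
      rw [this, indicator_of_notMem hz]
      simp
  rw [lintegral_congr hslice, lintegral_indicator hS]

lemma mem_cube_succ_iff {d : ℕ} (x : Fin (d+1) → ℝ) :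
    x ∈ unitCube (d+1) ↔
      ((fun i => x i.castSucc) ∈ unitCube d ∧ x (Fin.last d) ∈ Icc (0:ℝ) 1) := by
  simp only [unitCube, mem_pi, mem_univ, forall_true_left]
  constructor
  · intro h; exact ⟨fun j => h _, h _⟩
  · rintro ⟨h1, h2⟩ i
    induction i using Fin.lastCases with
    | last => exact h2
    | cast j => exact h1 j

lemma lowerGraph_eq (d : ℕ) (L : ℝ) (ψ : (Fin d → ℝ) → ℝ) :
    lowerGraph d L ψ = {x : Fin (d+1) → ℝ | (fun i => x i.castSucc) ∈ unitCube d
      ∧ x (Fin.last d) ∈ Icc (0:ℝ) 1 ∧ L * x (Fin.last d) ≤ ψ (fun i => x i.castSucc)} := by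
  ext x
  simp only [lowerGraph, mem_setOf_eq, mem_cube_succ_iff]
  tauto

lemma anchoredBox_subset_cube {d : ℕ} {t : Fin d → ℝ} (ht : t ∈ unitCube d) :
    anchoredBox d t ⊆ unitCube d := by
  intro z hz i _
  have h1 := hz i (mem_univ i)
  have h2 := ht i (mem_univ i)
  exact ⟨h1.1, h1.2.le.trans h2.2⟩

lemma Jstar_eq {d : ℕ} (L : ℝ) (ψ : (Fin d → ℝ) → ℝ) {t : Fin d → ℝ} (ht : t ∈ unitCube d) :
    Jstar d L ψ t = {x : Fin (d+1) → ℝ | (fun i => x i.castSucc) ∈ anchoredBox d t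
      ∧ x (Fin.last d) ∈ Icc (0:ℝ) 1 ∧ L * x (Fin.last d) ≤ ψ (fun i => x i.castSucc)} := by
  ext x
  simp only [Jstar, lowerGraph_eq, mem_inter_iff, mem_setOf_eq]
  constructor
  · rintro ⟨⟨h1, h2⟩, _, _, h5⟩; exact ⟨h1, h2, h5⟩
  · rintro ⟨h1, h2, h3⟩
    exact ⟨⟨h1, h2⟩, anchoredBox_subset_cube ht h1, h2, h3⟩

lemma toReal_lintegral_ofReal_div {d : ℕ} (L : ℝ) (hL0 : 0 < L) (ψ : (Fin d → ℝ) → ℝ)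
    (hmeas : Measurable ψ) (hpos : ∀ z, 0 ≤ ψ z) (S : Set (Fin d → ℝ)) :
    (∫⁻ z in S, ENNReal.ofReal (ψ z / L)).toReal = (∫ z in S, ψ z) / L := by
  have h1 : ∫ z in S, ψ z / L
      = (∫⁻ z in S, ENNReal.ofReal (ψ z / L)).toReal := by
    apply integral_eq_lintegral_of_nonneg_ae
    · exact Filter.Eventually.of_forall fun z => div_nonneg (hpos z) hL0.le
    · exact (hmeas.div_const L).aestronglyMeasurable
  rw [← h1, integral_div]

lemma empDisc_le_two {s : ℕ} (M : ℕ) (x : Fin M → (Fin s → ℝ)) (J : Set (Fin s → ℝ))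
    (hJc : J ⊆ unitCube s) : empDisc M x J ≤ 2 := by
  have h1 : (0:ℝ) ≤ (1 / (M : ℝ)) * ∑ n, Set.indicator J (fun _ => (1 : ℝ)) (x n) := by
    apply mul_nonneg (by positivity)
    exact Finset.sum_nonneg fun n _ => Set.indicator_nonneg (fun _ _ => zero_le_one) _
  have h2 : (1 / (M : ℝ)) * ∑ n, Set.indicator J (fun _ => (1 : ℝ)) (x n) ≤ 1 := by
    have hs : ∑ n, Set.indicator J (fun _ => (1 : ℝ)) (x n) ≤ (M:ℝ) := by
      calc ∑ n, Set.indicator J (fun _ => (1 : ℝ)) (x n)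
          ≤ ∑ _n : Fin M, (1:ℝ) :=
            Finset.sum_le_sum fun n _ =>
              Set.indicator_apply_le' (fun _ => le_refl 1) (fun _ => zero_le_one)
        _ = (M:ℝ) := by simp
    rcases Nat.eq_zero_or_pos M with hM | hM
    · subst hM; simp
    · have : (0:ℝ) < M := by exact_mod_cast hM
      rw [one_div, inv_mul_le_iff₀ this, mul_one]
      exact hs
  have h3 : (volume J).toReal ≤ 1 := by
    have this : volume J ≤ volume (unitCube s) := measure_mono hJc
    rw [volume_unitCube] at this
    calc (volume J).toReal ≤ (1:ℝ≥0∞).toReal := ENNReal.toReal_mono ENNReal.one_ne_top this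
      _ = 1 := by simp
  have h4 : (0:ℝ) ≤ (volume J).toReal := ENNReal.toReal_nonneg
  rw [empDisc, abs_sub_le_iff]
  constructor <;> linarith

lemma empDisc_le_isoDisc {s : ℕ} (M : ℕ) (x : Fin M → (Fin s → ℝ)) (J : Set (Fin s → ℝ))
    (hJ : Convex ℝ J) (hJc : J ⊆ unitCube s) : empDisc M x J ≤ isoDisc M x := by
  apply le_csSup
  · exact ⟨2, by rintro r ⟨J', hc, hsub, rfl⟩; exact empDisc_le_two M x J' hsub⟩
  · exact ⟨J, hJ, hJc, rfl⟩

lemma isoDisc_nonneg {s : ℕ} (M : ℕ) (x : Fin M → (Fin s → ℝ)) : 0 ≤ isoDisc M x :=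
  le_trans (abs_nonneg _) (empDisc_le_isoDisc M x ∅ convex_empty (empty_subset _))

lemma indicator_diff_apply {α : Type*} {s t : Set α} (h : t ⊆ s) (v : α) :
    Set.indicator (s \ t) (fun _ => (1:ℝ)) v
      = Set.indicator s (fun _ => (1:ℝ)) v - Set.indicator t (fun _ => (1:ℝ)) v := by
  by_cases hv : v ∈ t
  · rw [indicator_of_mem hv, indicator_of_mem (h hv),
      indicator_of_notMem (fun hd => hd.2 hv)]
    ring
  · rw [indicator_of_notMem hv]
    by_cases hs : v ∈ s
    · rw [indicator_of_mem hs, indicator_of_mem (show v ∈ s \ t from ⟨hs, hv⟩)]; ring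
    · rw [indicator_of_notMem hs, indicator_of_notMem (fun hd => hs hd.1)]; ring

lemma admiss_bound {s : ℕ} (p q : ℕ) (B : Set (Fin s → ℝ)) (h : AdmissCover p q B)
    (M : ℕ) (x : Fin M → (Fin s → ℝ)) :
    |(1 / (M:ℝ)) * ∑ n, Set.indicator B (fun _ => (1:ℝ)) (x n) - (volume B).toReal|
      ≤ (2 * (p:ℝ) - q) * isoDisc M x := by
  obtain ⟨hqp, A, hconv, hsub, hdisj, hcover, hin, hout⟩ := h
  set D := isoDisc M x with hD
  have hD0 : 0 ≤ D := isoDisc_nonneg M x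
  have hfin : ∀ j, volume (A j) ≠ ⊤ := fun j => by
    have h1 : volume (A j) ≤ 1 := by
      rw [← volume_unitCube s]; exact measure_mono (hsub j)
    exact (h1.trans_lt ENNReal.one_lt_top).ne
  have hfinB : ∀ j, volume (A j ∩ B) ≠ ⊤ := fun j =>
    ((measure_mono inter_subset_left).trans_lt (lt_top_iff_ne_top.2 (hfin j))).ne
  have hpt : ∀ v, Set.indicator B (fun _ => (1:ℝ)) v
      = ∑ j, Set.indicator (A j ∩ B) (fun _ => (1:ℝ)) v := by
    intro v
    by_cases hv : v ∈ B
    · obtain ⟨j0, hj0⟩ := mem_iUnion.1 (hcover hv)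
      rw [indicator_of_mem hv]
      rw [Finset.sum_eq_single j0]
      · rw [indicator_of_mem (show v ∈ A j0 ∩ B from ⟨hj0, hv⟩)]
      · intro j _ hj
        exact indicator_of_notMem (fun hm => (hdisj j j0 hj).ne_of_mem hm.1 hj0 rfl) _
      · intro hj; exact absurd (Finset.mem_univ j0) hj
    · rw [indicator_of_notMem hv]
      rw [Finset.sum_eq_zero]
      intro j _
      exact indicator_of_notMem (fun hm => hv hm.2) _
  have hnm : ∀ j : Fin p, NullMeasurableSet (A j ∩ B) volume := by
    intro j
    by_cases hj : (j:ℕ) < q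
    · rw [inter_eq_left.2 (hin j hj)]
      exact (hconv j).nullMeasurableSet _
    · have heq : A j ∩ B = A j \ (A j \ B) := by
        ext v; simp only [mem_inter_iff, mem_diff]; tauto
      rw [heq]
      exact ((hconv j).nullMeasurableSet _).diff
        ((hout j (le_of_not_gt hj)).nullMeasurableSet _)
  have hBeq : B = ⋃ j, A j ∩ B := by
    apply Subset.antisymm
    · intro v hv
      obtain ⟨j0, hj0⟩ := mem_iUnion.1 (hcover hv)
      exact mem_iUnion.2 ⟨j0, hj0, hv⟩
    · exact iUnion_subset fun j => inter_subset_right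
  have hvol : (volume B).toReal = ∑ j, (volume (A j ∩ B)).toReal := by
    have h1 := measure_iUnion₀
        (fun i j hij => ((hdisj i j hij).mono inter_subset_left inter_subset_left).aedisjoint)
        hnm
    rw [← hBeq] at h1
    rw [h1, tsum_fintype]
    exact ENNReal.toReal_sum fun j _ => hfinB j
  have hdec : (1 / (M:ℝ)) * ∑ n, Set.indicator B (fun _ => (1:ℝ)) (x n) - (volume B).toReal
      = ∑ j, ((1 / (M:ℝ)) * ∑ n, Set.indicator (A j ∩ B) (fun _ => (1:ℝ)) (x n)
          - (volume (A j ∩ B)).toReal) := by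
    rw [hvol, Finset.sum_sub_distrib, ← Finset.mul_sum]
    congr 1
    rw [Finset.sum_comm]
    congr 1
    exact Finset.sum_congr rfl fun n _ => hpt (x n)
  rw [hdec]
  calc |∑ j, ((1 / (M:ℝ)) * ∑ n, Set.indicator (A j ∩ B) (fun _ => (1:ℝ)) (x n)
          - (volume (A j ∩ B)).toReal)|
      ≤ ∑ j, empDisc M x (A j ∩ B) := by
        refine (Finset.abs_sum_le_sum_abs _ _).trans ?_
        exact le_of_eq (Finset.sum_congr rfl fun j _ => rfl)
    _ ≤ ∑ j : Fin p, (if (j:ℕ) < q then D else 2 * D) := by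
        apply Finset.sum_le_sum
        intro j _
        by_cases hj : (j:ℕ) < q
        · rw [if_pos hj, inter_eq_left.2 (hin j hj)]
          exact empDisc_le_isoDisc M x _ (hconv j) (hsub j)
        · rw [if_neg hj]
          have heq : A j ∩ B = A j \ (A j \ B) := by
            ext v; simp only [mem_inter_iff, mem_diff]; tauto
          have htsub : A j \ B ⊆ A j := diff_subset
          have hfin2 : volume (A j \ B) ≠ ⊤ :=
            ((measure_mono htsub).trans_lt (lt_top_iff_ne_top.2 (hfin j))).ne
          have hnm2 : NullMeasurableSet (A j \ B) volume :=
            (hout j (le_of_not_gt hj)).nullMeasurableSet _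
          have hv2 : (volume (A j ∩ B)).toReal
              = (volume (A j)).toReal - (volume (A j \ B)).toReal := by
            rw [heq, measure_diff htsub hnm2 hfin2,
              ENNReal.toReal_sub_of_le (measure_mono htsub) (hfin j)]
          have hi2 : ∀ n, Set.indicator (A j ∩ B) (fun _ => (1:ℝ)) (x n)
              = Set.indicator (A j) (fun _ => (1:ℝ)) (x n)
                - Set.indicator (A j \ B) (fun _ => (1:ℝ)) (x n) := by
            intro n; rw [heq]; exact indicator_diff_apply htsub (x n)
          have key : empDisc M x (A j ∩ B)
              ≤ empDisc M x (A j) + empDisc M x (A j \ B) := by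
            rw [empDisc, empDisc, empDisc, hv2]
            have heq2 : (1 / (M:ℝ)) * ∑ n, Set.indicator (A j ∩ B) (fun _ => (1:ℝ)) (x n)
                = (1 / (M:ℝ)) * ∑ n, Set.indicator (A j) (fun _ => (1:ℝ)) (x n)
                  - (1 / (M:ℝ)) * ∑ n, Set.indicator (A j \ B) (fun _ => (1:ℝ)) (x n) := by
              rw [← mul_sub, ← Finset.sum_sub_distrib]
              congr 1
              exact Finset.sum_congr rfl fun n _ => hi2 n
            rw [heq2]
            refine le_trans (le_of_eq (congrArg abs (by ring))) (abs_sub _ _)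
          refine key.trans ?_
          have e1 : empDisc M x (A j) ≤ D := empDisc_le_isoDisc M x _ (hconv j) (hsub j)
          have e2 : empDisc M x (A j \ B) ≤ D :=
            empDisc_le_isoDisc M x _ (hout j (le_of_not_gt hj)) (diff_subset.trans (hsub j))
          linarith
    _ = (q:ℝ) * D + ((p:ℝ) - q) * (2 * D) := by
        rw [Fin.sum_univ_eq_sum_range (fun i => if i < q then D else 2 * D) p]
        rw [Finset.range_eq_Ico, ← Finset.sum_Ico_consecutive _ (Nat.zero_le q) hqp]
        rw [Finset.sum_congr rfl (fun i hi => if_pos (Finset.mem_Ico.1 hi).2),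
          Finset.sum_congr rfl (fun i (hi : i ∈ Finset.Ico q p) =>
            if_neg (not_lt.2 (Finset.mem_Ico.1 hi).1))]
        simp [Finset.sum_const, Nat.card_Ico, Nat.cast_sub hqp]
    _ = (2 * (p:ℝ) - q) * D := by ring

theorem acceptance_rejection_discrepancy_bound
    (d : ℕ) (hd : 1 ≤ d) (L : ℝ) (ψ : (Fin d → ℝ) → ℝ)
    (hmeas : Measurable ψ) (hpos : ∀ z, 0 ≤ ψ z) (hL : ∀ z, ψ z ≤ L)
    (C : ℝ) (hC : C = ∫ z in unitCube d, ψ z) (hCpos : 0 < C)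
    (p q : ℕ)
    (hA : AdmissCover p q (lowerGraph d L ψ))
    (hJt : ∀ t ∈ unitCube d, ∃ p' q', p' ≤ p ∧ q ≤ q' ∧ AdmissCover p' q' (Jstar d L ψ t))
    (M N : ℕ) (hN : 0 < N)
    (x : Fin M → (Fin (d + 1) → ℝ)) (hx : ∀ n, x n ∈ unitCube (d + 1))
    (e : Fin N ≃ {n : Fin M // x n ∈ lowerGraph d L ψ})
    (y : Fin N → (Fin d → ℝ)) (hy : ∀ k, y k = fun i => x (e k) i.castSucc) :
    ∀ t ∈ unitCube d,
      |(1 / (N : ℝ)) * (∑ k, Set.indicator (anchoredBox d t) (fun _ => (1 : ℝ)) (y k))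
          - (1 / C) * ∫ z in anchoredBox d t, ψ z|
        ≤ ((M : ℝ) / (N : ℝ)) * 2 * (2 * (p : ℝ) - q) * isoDisc M x := by
  classical
  intro t ht
  -- basic positivity facts
  have hint : IntegrableOn ψ (unitCube d) volume := by
    apply Measure.integrableOn_of_bounded (M := L)
    · rw [volume_unitCube]; exact ENNReal.one_ne_top
    · exact hmeas.aestronglyMeasurable
    · refine Filter.Eventually.of_forall fun z => ?_
      rw [Real.norm_eq_abs, abs_of_nonneg (hpos z)]
      exact hL z
  have hCleL : C ≤ L := by
    rw [hC]
    calc ∫ z in unitCube d, ψ z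
        ≤ ∫ _z in unitCube d, L :=
          setIntegral_mono_on hint (integrableOn_const (by
            rw [volume_unitCube]; exact ENNReal.one_ne_top))
            (measurableSet_unitCube d) (fun z _ => hL z)
      _ = L := by rw [setIntegral_const, measureReal_def, volume_unitCube]; simp
  have hL0 : 0 < L := lt_of_lt_of_le hCpos hCleL
  have hLne : L ≠ 0 := hL0.ne'
  have hCne : C ≠ 0 := hCpos.ne'
  -- volumes of the two pseudo-convex sets
  have hAvol : (volume (lowerGraph d L ψ)).toReal = C / L := by
    rw [lowerGraph_eq, volume_slice d L hL0 ψ hmeas hL _ (measurableSet_unitCube d),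
      toReal_lintegral_ofReal_div L hL0 ψ hmeas hpos, hC]
  have hJvol : (volume (Jstar d L ψ t)).toReal = (∫ z in anchoredBox d t, ψ z) / L := by
    rw [Jstar_eq L ψ ht, volume_slice d L hL0 ψ hmeas hL _ (measurableSet_anchoredBox d t),
      toReal_lintegral_ofReal_div L hL0 ψ hmeas hpos]
  set I := ∫ z in anchoredBox d t, ψ z with hIdef
  have hI0 : 0 ≤ I := setIntegral_nonneg (measurableSet_anchoredBox d t) (fun z _ => hpos z)
  have hIC : I ≤ C := by
    rw [hC]
    exact setIntegral_mono_set hint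
      (Filter.Eventually.of_forall fun z => hpos z)
      (HasSubset.Subset.eventuallyLE (anchoredBox_subset_cube ht))
  -- discrepancy bounds for A and J*
  set D := isoDisc M x with hDdef
  have hD0 : 0 ≤ D := isoDisc_nonneg M x
  set E := (2 * (p:ℝ) - q) * D with hEdef
  have hE0 : 0 ≤ E := by
    apply mul_nonneg _ hD0
    have : (q:ℝ) ≤ p := by exact_mod_cast hA.1
    linarith
  set SJ := ∑ n, Set.indicator (Jstar d L ψ t) (fun _ => (1:ℝ)) (x n) with hSJdef
  set SA := ∑ n, Set.indicator (lowerGraph d L ψ) (fun _ => (1:ℝ)) (x n) with hSAdef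
  have hJdisc : |(1/(M:ℝ)) * SJ - (volume (Jstar d L ψ t)).toReal| ≤ E := by
    obtain ⟨p', q', hp', hq', hcov⟩ := hJt t ht
    refine (admiss_bound p' q' _ hcov M x).trans ?_
    apply mul_le_mul_of_nonneg_right _ hD0
    have h1 : (p':ℝ) ≤ p := by exact_mod_cast hp'
    have h2 : (q:ℝ) ≤ q' := by exact_mod_cast hq'
    linarith
  have hAdisc : |(1/(M:ℝ)) * SA - (volume (lowerGraph d L ψ)).toReal| ≤ E :=
    admiss_bound p q _ hA M x
  -- counting
  have hM0 : 0 < M := Fin.pos (e ⟨0, hN⟩).val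
  have hMne : ((M:ℝ)) ≠ 0 := by exact_mod_cast hM0.ne'
  have hNne : ((N:ℝ)) ≠ 0 := by exact_mod_cast hN.ne'
  have hSA : SA = (N:ℝ) := by
    have h1 : SA = ((Finset.univ.filter (fun n => x n ∈ lowerGraph d L ψ)).card : ℝ) := by
      rw [hSAdef, ← Finset.sum_boole]
      exact Finset.sum_congr rfl fun n _ => by rw [Set.indicator_apply]
    have h2 : N = Fintype.card {n : Fin M // x n ∈ lowerGraph d L ψ} := by
      rw [← Fintype.card_fin N]; exact Fintype.card_congr e
    rw [h1, h2, Fintype.card_subtype]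
  have hSJsum : ∑ k, Set.indicator (anchoredBox d t) (fun _ => (1:ℝ)) (y k) = SJ := by
    have hpt : ∀ k, Set.indicator (anchoredBox d t) (fun _ => (1:ℝ)) (y k)
        = Set.indicator (Jstar d L ψ t) (fun _ => (1:ℝ)) (x (e k)) := by
      intro k
      have hmem : x ((e k) : Fin M) ∈ lowerGraph d L ψ := (e k).2
      have hcube : x ((e k) : Fin M) ∈ unitCube (d+1) := hmem.1
      have hiff : ((fun i => x ((e k) : Fin M) i.castSucc) ∈ anchoredBox d t)
          ↔ x ((e k) : Fin M) ∈ Jstar d L ψ t := by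
        constructor
        · intro hb; exact ⟨⟨hb, ((mem_cube_succ_iff _).1 hcube).2⟩, hmem⟩
        · rintro ⟨⟨hb, _⟩, _⟩; exact hb
      rw [hy k, Set.indicator_apply, Set.indicator_apply]
      exact if_congr hiff rfl rfl
    rw [Finset.sum_congr rfl fun k _ => hpt k]
    rw [Equiv.sum_comp e (fun σ => Set.indicator (Jstar d L ψ t) (fun _ => (1:ℝ)) (x σ))]
    rw [← Finset.sum_subtype (Finset.univ.filter (fun n => x n ∈ lowerGraph d L ψ))
      (by simp) (fun n => Set.indicator (Jstar d L ψ t) (fun _ => (1:ℝ)) (x n))]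
    rw [Finset.sum_filter, hSJdef]
    apply Finset.sum_congr rfl
    intro n _
    by_cases hn : x n ∈ lowerGraph d L ψ
    · rw [if_pos hn]
    · rw [if_neg hn, indicator_of_notMem (fun hm => hn hm.2)]
  -- abbreviations for the final computation
  set a := (1/(M:ℝ)) * SJ with hadef
  set b := (1/(M:ℝ)) * SA with hbdef
  set va := (volume (Jstar d L ψ t)).toReal with hvadef
  set vb := (volume (lowerGraph d L ψ)).toReal with hvbdef
  have hb : b = (N:ℝ)/(M:ℝ) := by rw [hbdef, hSA]; ring
  have hbpos : 0 < b := by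
    rw [hb]; positivity
  have hvb : vb = C / L := hAvol
  have hva : va = I / L := hJvol
  have hvbpos : 0 < vb := by rw [hvb]; positivity
  have hva0 : 0 ≤ va := by rw [hva]; positivity
  have hvav : va ≤ vb := by
    rw [hva, hvb]; gcongr
  have hratio : va / vb = I / C := by
    rw [hva, hvb]; field_simp
  have hratio1 : va / vb ≤ 1 := (div_le_one hvbpos).2 hvav
  have hratio0 : 0 ≤ va / vb := div_nonneg hva0 hvbpos.le
  -- rewrite LHS
  have hlhs : (1 / (N : ℝ)) * (∑ k, Set.indicator (anchoredBox d t) (fun _ => (1 : ℝ)) (y k))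
      = a / b := by
    rw [hSJsum, hadef, hb]
    field_simp
  have hrhs : (1 / C) * I = va / vb := by rw [hratio]; ring
  rw [hlhs, hrhs]
  -- the key algebraic estimate
  have hkey : a/b - va/vb = ((a - va) - (va/vb) * (b - vb))/b := by
    field_simp
    ring
  rw [hkey, abs_div, abs_of_pos hbpos]
  have hnum : |(a - va) - (va/vb) * (b - vb)| ≤ 2 * E := by
    calc |(a - va) - (va/vb) * (b - vb)|
        ≤ |a - va| + |(va/vb) * (b - vb)| := abs_sub _ _
      _ = |a - va| + (va/vb) * |b - vb| := by rw [abs_mul, abs_of_nonneg hratio0]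
      _ ≤ E + 1 * E := by
          have h1 : (va/vb) * |b - vb| ≤ 1 * E := by
            apply mul_le_mul hratio1 hAdisc (abs_nonneg _) zero_le_one
          exact add_le_add hJdisc h1
      _ = 2 * E := by ring
  calc |(a - va) - (va/vb) * (b - vb)| / b ≤ (2 * E) / b := by gcongr
    _ = ((M : ℝ) / (N : ℝ)) * 2 * (2 * (p : ℝ) - q) * D := by
        rw [hb, hEdef]
        field_simp
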